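/- Consider the path network with node set {s, u, v, t}, arcs (s,u), (u,v), (v,t) each with resistance β = 1, and potential interval [0, 4]. There exists a feasible 3-stage gas s-t-flow of value 2 − √2 in which the potentials of s and t equal 2 in all three stages. Concretely, the stage potentials (π^i_s, π^i_u, π^i_v, π^i_t) given by (2,1,0,2), (2,1,3,2), (2,4,3,2) induce stationary gas flows whose stage-wise node balances sum to b with b_s = 2 − √2 = −b_t and b_u = b_v = 0. -/

import Mathlib

open Finset

/-- The stationary gas flow induced by node potentials `π` and resistances `β`
(Weymouth's equation). -/
noncomputable def inducedFlow {V : Type*} (β : V × V → ℝ) (π : V → ℝ) (a : V × V) : ℝ :=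
  Real.sign (π a.1 - π a.2) * Real.sqrt (|π a.1 - π a.2| / β a)

/-- The node balance (outflow minus inflow) at node `v` of the stationary gas flow
induced by `π`. -/
noncomputable def balance {V : Type*} [DecidableEq V] (A : Finset (V × V))
    (β : V × V → ℝ) (π : V → ℝ) (v : V) : ℝ :=
  (∑ a ∈ A.filter (fun a => a.1 = v), inducedFlow β π a) -
    (∑ a ∈ A.filter (fun a => a.2 = v), inducedFlow β π a)

/-- The arcs of the path network `s = 0 → u = 1 → v = 2 → t = 3` of Example 1. -/
def pathArcs : Finset (Fin 4 × Fin 4) := {(0, 1), (1, 2), (2, 3)}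

/-- The three stage potentials of Example 1 (Fig. 1 of the paper). -/
noncomputable def examplePotentials : Fin 3 → Fin 4 → ℝ :=
  ![![2, 1, 0, 2], ![2, 1, 3, 2], ![2, 4, 3, 2]]

/-- Example 1 of the paper: on the path network with unit resistances and potential
interval `[0,4]`, the given stage potentials form a feasible 3-stage gas s-t-flow of
value `2 - √2` in which the potentials of `s` and `t` equal `2` in all three stages. -/
theorem pump_example :
    (∀ (i : Fin 3) (v : Fin 4), 0 ≤ examplePotentials i v ∧ examplePotentials i v ≤ 4) ∧
      (∀ i : Fin 3, examplePotentials i 0 = 2 ∧ examplePotentials i 3 = 2) ∧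
      (∀ v : Fin 4,
        ∑ i : Fin 3, balance pathArcs (fun _ => 1) (examplePotentials i) v =
          if v = 0 then 2 - Real.sqrt 2
          else if v = 3 then -(2 - Real.sqrt 2) else 0) := by
  refine ⟨?_, ?_, ?_⟩
  · intro i v
    fin_cases i <;> fin_cases v <;> norm_num [examplePotentials]
  · intro i
    fin_cases i <;> norm_num [examplePotentials, Matrix.cons_val_three, Matrix.cons_val_two, Matrix.tail_cons, Matrix.head_cons]
  · intro v
    have s1 : Real.sign 1 = 1 := Real.sign_of_pos one_pos
    have s2 : Real.sign (-2) = -1 := Real.sign_of_neg (by norm_num)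
    have h3 : ((3 : Fin 4)).val = 3 := rfl
    fin_cases v <;>
    · simp only [Fin.sum_univ_three, balance, pathArcs, Finset.filter_insert,
        Finset.filter_singleton]
      norm_num [inducedFlow, examplePotentials, s1, s2, Fin.ext_iff, h3, Matrix.cons_val_three, Matrix.cons_val_two, Matrix.tail_cons, Matrix.head_cons]
      ring
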